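/- For all c, d ≥ 1 and for any client v ∈ C: P( r_1(N(v)) ≥ 2d·Δ_v·(Δ_max(S)/Δ_min(C)) ) ≤ e^{−(1/3)·d·Δ_max(S)}; consequently, with probability at least 1 − n·e^{−(1/3)·d·Δ_max(S)}, it holds that K_1 ≤ (2/c)·(Δ_max(S)/Δ_min(C)). In particular, if Δ_min(C) ≥ η·log²n for a constant η > 0, these bounds hold with high probability. -/

import Mathlib

open MeasureTheory ProbabilityTheory Finset
open scoped ENNReal Classical

noncomputable section

namespace LoadBalancing

/-- State of the ball-assignment process: for each client `v` and ball index `i`,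
whether the ball is still alive (not yet accepted), and for each server a counter
(for SAER: the total number of requests received so far; for RAES: the total number
of accepted requests so far). -/
structure PState (C 𝕊 : Type*) (d : ℕ) where
  alive : C → Fin d → Prop
  total : 𝕊 → ℕ

variable {C 𝕊 Ω : Type*} [Fintype C] [Fintype 𝕊]

/-- The number of balls that server `u` receives in a round in which the set of
alive balls is `al` and the random destinations are given by `σ`. -/
def recvCount {d : ℕ} (al : C → Fin d → Prop) (σ : C → Fin d → 𝕊) (u : 𝕊) : ℕ :=
  (Finset.univ.filter (fun p : C × Fin d => al p.1 p.2 ∧ σ p.1 p.2 = u)).card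

/-- One round of SAER with threshold `τ` (= c·d): `total` counts all requests ever
received; a server is *burned* as soon as `τ ≤ total`, and a burned server rejects
all requests of the current and of all subsequent rounds; non-burned servers accept
all balls received. -/
def sStep {d : ℕ} (τ : ℝ) (σ : C → Fin d → 𝕊) (st : PState C 𝕊 d) : PState C 𝕊 d where
  alive := fun v i => st.alive v i ∧
    τ ≤ ((st.total (σ v i) + recvCount st.alive σ (σ v i) : ℕ) : ℝ)
  total := fun u => st.total u + recvCount st.alive σ u

/-- The SAER state after `t` rounds, where the (random) destination choices of
round `s ≥ 1` are given by `σ s`.  Initially all `d` balls of every client are alive. -/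
def sState {d : ℕ} (τ : ℝ) (σ : ℕ → C → Fin d → 𝕊) : ℕ → PState C 𝕊 d
  | 0 => ⟨fun _ _ => True, fun _ => 0⟩
  | t + 1 => sStep τ (σ (t + 1)) (sState τ σ t)

/-- One round of RAES with threshold `τ` (= c·d): `total` counts the accepted
requests; a server accepts all balls received in the current round unless doing so
would make its number of accepted balls exceed `τ`, in which case it is *saturated*
and rejects all balls received in the current round (but may accept again later). -/
def rStep {d : ℕ} (τ : ℝ) (σ : C → Fin d → 𝕊) (st : PState C 𝕊 d) : PState C 𝕊 d where
  alive := fun v i => st.alive v i ∧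
    τ < ((st.total (σ v i) + recvCount st.alive σ (σ v i) : ℕ) : ℝ)
  total := fun u =>
    if τ < ((st.total u + recvCount st.alive σ u : ℕ) : ℝ) then st.total u
    else st.total u + recvCount st.alive σ u

/-- The RAES state after `t` rounds. -/
def rState {d : ℕ} (τ : ℝ) (σ : ℕ → C → Fin d → 𝕊) : ℕ → PState C 𝕊 d
  | 0 => ⟨fun _ _ => True, fun _ => 0⟩
  | t + 1 => rStep τ (σ (t + 1)) (rState τ σ t)

/-- The destination choices determined by a sample point `ω`. -/
def env {d : ℕ} (choice : ℕ → C → Fin d → Ω → 𝕊) (ω : Ω) : ℕ → C → Fin d → 𝕊 :=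
  fun t v i => choice t v i ω

/-- `a_t^{(i)}(v)`: the `i`-th ball of client `v` is still alive at the beginning of
round `t` (`t ≥ 1`) of SAER. -/
def aliveAt {d : ℕ} (τ : ℝ) (choice : ℕ → C → Fin d → Ω → 𝕊) (t : ℕ) (v : C) (i : Fin d)
    (ω : Ω) : Prop :=
  (sState τ (env choice ω) (t - 1)).alive v i

/-- `r_t(u)`: the number of balls that server `u` receives at round `t` of SAER. -/
def recvAt {d : ℕ} (τ : ℝ) (choice : ℕ → C → Fin d → Ω → 𝕊) (t : ℕ) (u : 𝕊) (ω : Ω) : ℕ :=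
  recvCount (sState τ (env choice ω) (t - 1)).alive (env choice ω t) u

/-- `r_t(N(v))`: the number of balls received at round `t` by the neighbourhood of `v`. -/
def recvNbhd {d : ℕ} (τ : ℝ) (Nb : C → Finset 𝕊) (choice : ℕ → C → Fin d → Ω → 𝕊)
    (t : ℕ) (v : C) (ω : Ω) : ℕ :=
  ∑ u ∈ Nb v, recvAt τ choice t u ω

/-- Server `u` is burned at round `t`: it has received at least `τ = c·d` balls
during rounds `1, …, t`. -/
def burnedAt {d : ℕ} (τ : ℝ) (choice : ℕ → C → Fin d → Ω → 𝕊) (t : ℕ) (u : 𝕊) (ω : Ω) :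
    Prop :=
  τ ≤ ((sState τ (env choice ω) t).total u : ℝ)

/-- `S_t(v)`: the fraction of burned servers in the neighbourhood of `v` at round `t`. -/
def fracBurned {d : ℕ} (τ : ℝ) (Nb : C → Finset 𝕊) (choice : ℕ → C → Fin d → Ω → 𝕊)
    (t : ℕ) (v : C) (ω : Ω) : ℝ :=
  ((Nb v).filter (fun u => burnedAt τ choice t u ω)).card / (Nb v).card

/-- `K_t(v) = (1/(c·d·Δ_v)) · Σ_{s=1}^t r_s(N(v))`. -/
def Kval {d : ℕ} (c : ℝ) (Nb : C → Finset 𝕊) (choice : ℕ → C → Fin d → Ω → 𝕊)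
    (t : ℕ) (v : C) (ω : Ω) : ℝ :=
  (∑ s ∈ Finset.Icc 1 t, (recvNbhd (c * d) Nb choice s v ω : ℝ)) / (c * d * (Nb v).card)

/-- The number of balls alive at the beginning of round `t + 1` (after `t` rounds
of SAER). -/
def aliveNum {d : ℕ} (τ : ℝ) (choice : ℕ → C → Fin d → Ω → 𝕊) (t : ℕ) (ω : Ω) : ℕ :=
  (Finset.univ.filter (fun p : C × Fin d => (sState τ (env choice ω) t).alive p.1 p.2)).card

/-- The work of SAER: every alive ball produces one request message and one answer
message in each round, hence the total number of exchanged messages is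
`2 · Σ_t (number of balls alive at the beginning of round t)`. -/
def workOf {d : ℕ} (τ : ℝ) (choice : ℕ → C → Fin d → Ω → 𝕊) (ω : Ω) : ℝ≥0∞ :=
  2 * ∑' t : ℕ, (aliveNum τ choice t ω : ℝ≥0∞)

/-- The number of balls alive after `t` rounds of RAES. -/
def aliveNumR {d : ℕ} (τ : ℝ) (choice : ℕ → C → Fin d → Ω → 𝕊) (t : ℕ) (ω : Ω) : ℕ :=
  (Finset.univ.filter (fun p : C × Fin d => (rState τ (env choice ω) t).alive p.1 p.2)).card

/-- The work of RAES. -/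
def workOfR {d : ℕ} (τ : ℝ) (choice : ℕ → C → Fin d → Ω → 𝕊) (ω : Ω) : ℝ≥0∞ :=
  2 * ∑' t : ℕ, (aliveNumR τ choice t ω : ℝ≥0∞)

/-- The random environment of the protocol: for every round `t`, client `v` and ball
index `i`, the destination `choice t v i` is uniform on the neighbourhood `Nb v`, and
all these choices (over all rounds, clients and ball indices) are mutually independent. -/
def UnifIndep {d : ℕ} [MeasurableSpace Ω] (P : Measure Ω) (Nb : C → Finset 𝕊)
    (choice : ℕ → C → Fin d → Ω → 𝕊) : Prop :=
  (∀ t v i u, P {ω | choice t v i ω = u}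
      = if u ∈ Nb v then ((Nb v).card : ℝ≥0∞)⁻¹ else 0) ∧
  iIndepFun (m := fun _ : ℕ × C × Fin d => (⊤ : MeasurableSpace 𝕊))
    (fun p ω => choice p.1 p.2.1 p.2.2 ω) P

/-- The degree of a server `u`: the number of clients having `u` in their neighbourhood. -/
def serverDeg (Nb : C → Finset 𝕊) (u : 𝕊) : ℕ :=
  (Finset.univ.filter (fun v => u ∈ Nb v)).card

/-- The bipartite graph given by the neighbourhoods `Nb` is `Δ`-regular. -/
def Regular (Nb : C → Finset 𝕊) (Δ : ℕ) : Prop :=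
  (∀ v, (Nb v).card = Δ) ∧ (∀ u, serverDeg Nb u = Δ)


section AuxLemmas



lemma card_sum {α 𝕊 : Type*} [Fintype α] [Fintype 𝕊] (f : α → 𝕊) (s : Finset 𝕊) :
    ∑ u ∈ s, (Finset.univ.filter fun p => f p = u).card
      = (Finset.univ.filter fun p => f p ∈ s).card := by
  simp only [Finset.card_filter]
  rw [Finset.sum_comm]
  refine Finset.sum_congr rfl fun p _ => ?_
  rw [Finset.sum_ite_eq s (f p) (fun _ => (1:ℕ))]

lemma chernoff_core {I 𝕊 : Type*} [Fintype I] [Fintype 𝕊] (w : I → 𝕊 → ℝ)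
    (hw0 : ∀ p u, 0 ≤ w p u) (hw1 : ∀ p, ∑ u, w p u = 1)
    (A : I → Finset 𝕊) (M : ℝ)
    (hM : ∑ p, ∑ u ∈ A p, w p u ≤ M) :
    ∑ g ∈ Finset.univ.filter
        (fun g : I → 𝕊 => 2 * M ≤ ((Finset.univ.filter fun p => g p ∈ A p).card : ℝ)),
      ∏ p, w p (g p) ≤ Real.exp (-(1/3) * M) := by
  have hq0 : ∀ p, (0:ℝ) ≤ ∑ u ∈ A p, w p u := fun p => Finset.sum_nonneg fun u _ => hw0 p u
  have hM0 : (0:ℝ) ≤ M := le_trans (Finset.sum_nonneg fun p _ => hq0 p) hM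
  set f : I → 𝕊 → ℝ := fun p u => if u ∈ A p then 2 else 1 with hf
  have hf0 : ∀ p u, (0:ℝ) ≤ f p u := by intro p u; by_cases h : u ∈ A p <;> simp [hf, h]
  have hprodw0 : ∀ g : I → 𝕊, (0:ℝ) ≤ ∏ p, w p (g p) :=
    fun g => Finset.prod_nonneg fun p _ => hw0 p (g p)
  have hcount : ∀ g : I → 𝕊,
      ∏ p, f p (g p) = (2:ℝ) ^ ((Finset.univ.filter fun p => g p ∈ A p).card) := by
    intro g
    rw [show (fun p => f p (g p)) = fun p => if g p ∈ A p then (2:ℝ) else 1 from rfl]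
    rw [Finset.prod_ite, Finset.prod_const, Finset.prod_const_one, mul_one]
  have step1 : ∀ g ∈ Finset.univ.filter
      (fun g : I → 𝕊 => 2 * M ≤ ((Finset.univ.filter fun p => g p ∈ A p).card : ℝ)),
      ∏ p, w p (g p)
        ≤ Real.exp (-(2*M) * Real.log 2) * ∏ p, (w p (g p) * f p (g p)) := by
    intro g hg
    rw [Finset.mem_filter] at hg
    have hcnt := hg.2
    have h2pow : Real.exp ((2*M) * Real.log 2)
        ≤ (2:ℝ) ^ ((Finset.univ.filter fun p => g p ∈ A p).card) := by
      calc Real.exp ((2*M) * Real.log 2) = (2:ℝ) ^ (2*M : ℝ) := by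
            rw [Real.rpow_def_of_pos (by norm_num : (0:ℝ) < 2)]; ring_nf
        _ ≤ (2:ℝ) ^ (((Finset.univ.filter fun p => g p ∈ A p).card : ℝ)) :=
            Real.rpow_le_rpow_of_exponent_le one_le_two hcnt
        _ = (2:ℝ) ^ ((Finset.univ.filter fun p => g p ∈ A p).card) := by
            rw [Real.rpow_natCast]
    have hge1 : (1:ℝ) ≤ Real.exp (-(2*M) * Real.log 2) * ∏ p, f p (g p) := by
      rw [hcount]
      calc (1:ℝ) = Real.exp (-(2*M) * Real.log 2) * Real.exp ((2*M) * Real.log 2) := by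
            rw [← Real.exp_add]; ring_nf; rw [Real.exp_zero]
        _ ≤ _ := mul_le_mul_of_nonneg_left h2pow (Real.exp_pos _).le
    calc ∏ p, w p (g p) = (∏ p, w p (g p)) * 1 := (mul_one _).symm
      _ ≤ (∏ p, w p (g p)) * (Real.exp (-(2*M) * Real.log 2) * ∏ p, f p (g p)) :=
          mul_le_mul_of_nonneg_left hge1 (hprodw0 g)
      _ = Real.exp (-(2*M) * Real.log 2) * ∏ p, (w p (g p) * f p (g p)) := by
          rw [Finset.prod_mul_distrib]; ring
  have hsum_eq : ∑ g : I → 𝕊, ∏ p, (w p (g p) * f p (g p))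
      = ∏ p, ∑ u, (w p u * f p u) := by
    rw [Finset.prod_univ_sum]
    rw [Fintype.piFinset_univ]
  have hfac : ∀ p, ∑ u, (w p u * f p u) = 1 + ∑ u ∈ A p, w p u := by
    intro p
    have h1 : ∀ u, w p u * f p u = w p u + (if u ∈ A p then w p u else 0) := by
      intro u; by_cases h : u ∈ A p <;> simp [hf, h] <;> ring
    simp_rw [h1]
    rw [Finset.sum_add_distrib, hw1, Finset.sum_ite_mem, Finset.univ_inter]
  have hphase : ∏ p, ∑ u, (w p u * f p u) ≤ Real.exp M := by
    simp_rw [hfac]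
    calc ∏ p, (1 + ∑ u ∈ A p, w p u) ≤ ∏ p, Real.exp (∑ u ∈ A p, w p u) :=
          Finset.prod_le_prod (fun p _ => by have := hq0 p; linarith)
            (fun p _ => by have := Real.add_one_le_exp (∑ u ∈ A p, w p u); linarith)
      _ = Real.exp (∑ p, ∑ u ∈ A p, w p u) := (Real.exp_sum _ _).symm
      _ ≤ Real.exp M := Real.exp_le_exp.2 hM
  calc ∑ g ∈ Finset.univ.filter
        (fun g : I → 𝕊 => 2 * M ≤ ((Finset.univ.filter fun p => g p ∈ A p).card : ℝ)),
      ∏ p, w p (g p)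
      ≤ ∑ g ∈ Finset.univ.filter
        (fun g : I → 𝕊 => 2 * M ≤ ((Finset.univ.filter fun p => g p ∈ A p).card : ℝ)),
        Real.exp (-(2*M) * Real.log 2) * ∏ p, (w p (g p) * f p (g p)) :=
        Finset.sum_le_sum step1
    _ ≤ ∑ g : I → 𝕊, Real.exp (-(2*M) * Real.log 2) * ∏ p, (w p (g p) * f p (g p)) :=
        Finset.sum_le_sum_of_subset_of_nonneg (Finset.filter_subset _ _)
          (fun g _ _ => mul_nonneg (Real.exp_pos _).le
            (Finset.prod_nonneg fun p _ => mul_nonneg (hw0 p (g p)) (hf0 p (g p))))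
    _ = Real.exp (-(2*M) * Real.log 2) * ∑ g : I → 𝕊, ∏ p, (w p (g p) * f p (g p)) := by
        rw [Finset.mul_sum]
    _ ≤ Real.exp (-(2*M) * Real.log 2) * Real.exp M := by
        rw [hsum_eq]
        exact mul_le_mul_of_nonneg_left hphase (Real.exp_pos _).le
    _ ≤ Real.exp (-(1/3) * M) := by
        rw [← Real.exp_add]
        apply Real.exp_le_exp.2
        nlinarith [Real.log_two_gt_d9, hM0]



lemma transfer {Ω 𝕊 I : Type*} [Fintype 𝕊] [Fintype I] [MeasurableSpace Ω]
    (P : Measure Ω) [IsProbabilityMeasure P] (pick : I → Ω → 𝕊) (w : I → 𝕊 → ℝ)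
    (hw0 : ∀ p u, 0 ≤ w p u)
    (hw1 : ∀ p, ∑ u, w p u = 1)
    (hatom : ∀ g : I → 𝕊, P {ω | ∀ p, pick p ω = g p}
        = ENNReal.ofReal (∏ p, w p (g p)))
    (φ : (I → 𝕊) → Prop) :
    P {ω | φ (fun p => pick p ω)}
      = ENNReal.ofReal (∑ g ∈ Finset.univ.filter φ, ∏ p, w p (g p)) := by
  have hprodnn : ∀ g : I → 𝕊, (0:ℝ) ≤ ∏ p, w p (g p) :=
    fun g => Finset.prod_nonneg fun p _ => hw0 p (g p)
  have key : ∀ ψ : (I → 𝕊) → Prop,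
      P {ω | ψ (fun p => pick p ω)}
        ≤ ENNReal.ofReal (∑ g ∈ Finset.univ.filter ψ, ∏ p, w p (g p)) := by
    intro ψ
    have hcover : {ω | ψ (fun p => pick p ω)}
        = ⋃ g ∈ Finset.univ.filter ψ, {ω | ∀ p, pick p ω = g p} := by
      ext ω
      simp only [Set.mem_setOf_eq, Set.mem_iUnion, Finset.mem_filter, Finset.mem_univ,
        true_and]
      constructor
      · intro h
        exact ⟨fun p => pick p ω, h, fun p => rfl⟩
      · rintro ⟨g, hg, hgp⟩
        have : (fun p => pick p ω) = g := funext hgp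
        rwa [this]
    rw [hcover]
    calc P (⋃ g ∈ Finset.univ.filter ψ, {ω | ∀ p, pick p ω = g p})
        ≤ ∑ g ∈ Finset.univ.filter ψ, P {ω | ∀ p, pick p ω = g p} :=
          measure_biUnion_finset_le _ _
      _ = ∑ g ∈ Finset.univ.filter ψ, ENNReal.ofReal (∏ p, w p (g p)) := by
          exact Finset.sum_congr rfl fun g _ => hatom g
      _ = ENNReal.ofReal (∑ g ∈ Finset.univ.filter ψ, ∏ p, w p (g p)) := by
          rw [ENNReal.ofReal_sum_of_nonneg fun g _ => hprodnn g]
  have htotal : ∑ g : I → 𝕊, ∏ p, w p (g p) = 1 := by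
    rw [← Fintype.piFinset_univ, ← Finset.prod_univ_sum]
    simp [hw1]
  have hsplit : (∑ g ∈ Finset.univ.filter φ, ∏ p, w p (g p))
      + (∑ g ∈ Finset.univ.filter (fun g => ¬ φ g), ∏ p, w p (g p)) = 1 := by
    rw [Finset.sum_filter_add_sum_filter_not]
    exact htotal
  refine le_antisymm (key φ) ?_
  have hcompl : {ω | φ (fun p => pick p ω)}ᶜ = {ω | (¬ φ (fun p => pick p ω))} := rfl
  have h1 : (1:ℝ≥0∞) ≤ P {ω | φ (fun p => pick p ω)}
      + P {ω | ¬ φ (fun p => pick p ω)} := by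
    calc (1:ℝ≥0∞) = P Set.univ := measure_univ.symm
      _ = P ({ω | φ (fun p => pick p ω)} ∪ {ω | φ (fun p => pick p ω)}ᶜ) := by
          rw [Set.union_compl_self]
      _ ≤ _ := by rw [hcompl]; exact measure_union_le _ _
  have h2 := key (fun g => ¬ φ g)
  have hb : (∑ g ∈ Finset.univ.filter (fun g => ¬ φ g), ∏ p, w p (g p)) ≤ 1 := by
    nlinarith [Finset.sum_nonneg (fun g (_ : g ∈ Finset.univ.filter φ) => hprodnn g)]
  calc ENNReal.ofReal (∑ g ∈ Finset.univ.filter φ, ∏ p, w p (g p))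
      = 1 - ENNReal.ofReal (∑ g ∈ Finset.univ.filter (fun g => ¬ φ g), ∏ p, w p (g p)) := by
        rw [← ENNReal.ofReal_one, ← ENNReal.ofReal_sub _ (Finset.sum_nonneg
          fun g _ => hprodnn g)]
        congr 1
        linarith [hsplit]
    _ ≤ 1 - P {ω | ¬ φ (fun p => pick p ω)} := by
        refine tsub_le_tsub_left ?_ 1
        convert h2 using 4
        rfl
    _ ≤ P {ω | φ (fun p => pick p ω)} := by
        rw [tsub_le_iff_right]
        exact h1


lemma aux_atom_eq {d : ℕ} [MeasurableSpace Ω] (P : Measure Ω)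
    (Nb : C → Finset 𝕊) (choice : ℕ → C → Fin d → Ω → 𝕊)
    (hU : UnifIndep P Nb choice) (g : C × Fin d → 𝕊) :
    P {ω | ∀ p : C × Fin d, choice 1 p.1 p.2 ω = g p}
      = ∏ p : C × Fin d, P {ω | choice 1 p.1 p.2 ω = g p} := by
  classical
  have hinj : Function.Injective (fun p : C × Fin d => ((1:ℕ), p.1, p.2)) := by
    intro a b hab
    simpa [Prod.ext_iff] using hab
  have h := (iIndepFun_iff_measure_inter_preimage_eq_mul.mp hU.2)
    (Finset.univ.image (fun p : C × Fin d => ((1:ℕ), p.1, p.2)))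
    (sets := fun j => {g (j.2.1, j.2.2)}) (fun i _ => MeasurableSpace.measurableSet_top)
  have hset : {ω | ∀ p : C × Fin d, choice 1 p.1 p.2 ω = g p}
      = ⋂ j ∈ Finset.univ.image (fun p : C × Fin d => ((1:ℕ), p.1, p.2)),
          (fun ω => choice j.1 j.2.1 j.2.2 ω) ⁻¹' {g (j.2.1, j.2.2)} := by
    ext ω
    simp only [Set.mem_setOf_eq, Set.mem_iInter, Finset.mem_image, Finset.mem_univ, true_and,
      Set.mem_preimage, Set.mem_singleton_iff]
    constructor
    · rintro h j ⟨p, rfl⟩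
      exact h p
    · intro h p
      exact h ((1:ℕ), p.1, p.2) ⟨p, rfl⟩
  rw [hset, h, Finset.prod_image (fun a _ b _ hab => hinj hab)]
  rfl

lemma aux_recv_one {d : ℕ} (τ : ℝ) (Nb : C → Finset 𝕊) {Ω : Type*}
    (choice : ℕ → C → Fin d → Ω → 𝕊) (v : C) (ω : Ω) :
    recvNbhd τ Nb choice 1 v ω
      = (Finset.univ.filter (fun p : C × Fin d => choice 1 p.1 p.2 ω ∈ Nb v)).card := by
  have h : ∀ u : 𝕊, recvAt τ choice 1 u ω
      = (Finset.univ.filter (fun p : C × Fin d => choice 1 p.1 p.2 ω = u)).card := by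
    intro u
    simp [recvAt, recvCount, sState, env]
  rw [recvNbhd]
  simp_rw [h]
  exact card_sum _ _

lemma aux_client_bound [MeasurableSpace Ω]
    (Nb : C → Finset 𝕊) (Δmin Δmax : ℕ)
    (hmin : IsLeast (Set.range fun v => (Nb v).card) Δmin)
    (hmax : IsGreatest (Set.range fun u => serverDeg Nb u) Δmax)
    (hΔ : 1 ≤ Δmin) (d : ℕ) (hd : 1 ≤ d) (τ : ℝ)
    (P : Measure Ω) [IsProbabilityMeasure P]
    (choice : ℕ → C → Fin d → Ω → 𝕊) (hU : UnifIndep P Nb choice) (v : C) :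
    P {ω | 2 * d * ((Nb v).card : ℝ) * ((Δmax : ℝ) / (Δmin : ℝ)) ≤
          (recvNbhd τ Nb choice 1 v ω : ℝ)}
      ≤ ENNReal.ofReal (Real.exp (-(1 / 3) * d * (Δmax : ℝ))) := by
  classical
  have hNb : ∀ w : C, Δmin ≤ (Nb w).card := fun w => hmin.2 ⟨w, rfl⟩
  have hNb1 : ∀ w : C, 0 < (Nb w).card := fun w => lt_of_lt_of_le hΔ (hNb w)
  have hminpos : (0:ℝ) < (Δmin : ℝ) := by exact_mod_cast hΔ
  set w : (C × Fin d) → 𝕊 → ℝ :=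
    fun p u => if u ∈ Nb p.1 then ((Nb p.1).card : ℝ)⁻¹ else 0 with hw
  have hw0 : ∀ p u, 0 ≤ w p u := by
    intro p u
    by_cases h : u ∈ Nb p.1 <;> simp [hw, h]
  have hw1 : ∀ p, ∑ u, w p u = 1 := by
    intro p
    rw [hw]
    simp only
    rw [Finset.sum_ite_mem, Finset.univ_inter, Finset.sum_const, nsmul_eq_mul]
    rw [mul_inv_cancel₀]
    exact_mod_cast (hNb1 p.1).ne'
  have hatom : ∀ g : C × Fin d → 𝕊, P {ω | ∀ p : C × Fin d, choice 1 p.1 p.2 ω = g p}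
      = ENNReal.ofReal (∏ p, w p (g p)) := by
    intro g
    rw [aux_atom_eq P Nb choice hU g]
    rw [ENNReal.ofReal_prod_of_nonneg (fun p _ => hw0 p (g p))]
    refine Finset.prod_congr rfl fun p _ => ?_
    rw [hU.1 1 p.1 p.2 (g p)]
    by_cases h : g p ∈ Nb p.1
    · simp only [h, if_true, hw]
      rw [ENNReal.ofReal_inv_of_pos (by exact_mod_cast hNb1 p.1), ENNReal.ofReal_natCast]
    · simp [h, hw]
  set M : ℝ := d * ((Nb v).card : ℝ) * (Δmax : ℝ) / (Δmin : ℝ) with hMdef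
  have hsum_prod : ∀ F : C → ℝ, ∑ p : C × Fin d, F p.1 = d * ∑ x : C, F x := by
    intro F
    rw [Fintype.sum_prod_type]
    simp only [Finset.sum_const, Finset.card_univ, Fintype.card_fin, nsmul_eq_mul]
    rw [← Finset.mul_sum]
  have hdeg : ∑ x : C, ∑ u ∈ Nb v, (if u ∈ Nb x then (1:ℝ) else 0)
      = ∑ u ∈ Nb v, (serverDeg Nb u : ℝ) := by
    rw [Finset.sum_comm]
    refine Finset.sum_congr rfl fun u _ => ?_
    rw [serverDeg, Finset.card_filter]
    push_cast
    rfl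
  have hdegle : ∑ u ∈ Nb v, (serverDeg Nb u : ℝ) ≤ ((Nb v).card : ℝ) * (Δmax : ℝ) := by
    calc ∑ u ∈ Nb v, (serverDeg Nb u : ℝ) ≤ ∑ _u ∈ Nb v, (Δmax:ℝ) :=
        Finset.sum_le_sum fun u _ => by exact_mod_cast hmax.2 ⟨u, rfl⟩
      _ = _ := by rw [Finset.sum_const, nsmul_eq_mul]
  have hM : ∑ p : C × Fin d, ∑ u ∈ Nb v, w p u ≤ M := by
    have hb : ∀ p : C × Fin d, ∑ u ∈ Nb v, w p u
        ≤ (Δmin:ℝ)⁻¹ * ∑ u ∈ Nb v, (if u ∈ Nb p.1 then (1:ℝ) else 0) := by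
      intro p
      rw [Finset.mul_sum]
      refine Finset.sum_le_sum fun u _ => ?_
      by_cases h : u ∈ Nb p.1
      · simp only [hw, h, if_true, mul_one]
        exact inv_anti₀ hminpos (by exact_mod_cast hNb p.1)
      · simp [hw, h]
    calc ∑ p : C × Fin d, ∑ u ∈ Nb v, w p u
        ≤ ∑ p : C × Fin d, (Δmin:ℝ)⁻¹ * ∑ u ∈ Nb v, (if u ∈ Nb p.1 then (1:ℝ) else 0) :=
          Finset.sum_le_sum fun p _ => hb p
      _ = (Δmin:ℝ)⁻¹ * ∑ p : C × Fin d, ∑ u ∈ Nb v, (if u ∈ Nb p.1 then (1:ℝ) else 0) := by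
          rw [← Finset.mul_sum]
      _ = (Δmin:ℝ)⁻¹ * ((d:ℝ) * ∑ u ∈ Nb v, (serverDeg Nb u : ℝ)) := by
          rw [hsum_prod (fun x => ∑ u ∈ Nb v, (if u ∈ Nb x then (1:ℝ) else 0)), hdeg]
      _ ≤ (Δmin:ℝ)⁻¹ * ((d:ℝ) * (((Nb v).card : ℝ) * (Δmax : ℝ))) := by
          have h1 : (0:ℝ) ≤ (Δmin:ℝ)⁻¹ := by positivity
          have h2 : (0:ℝ) ≤ (d:ℝ) := by positivity
          exact mul_le_mul_of_nonneg_left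
            (mul_le_mul_of_nonneg_left hdegle h2) h1
      _ = M := by rw [hMdef, div_eq_mul_inv]; ring
  have hT : 2 * (d:ℝ) * ((Nb v).card : ℝ) * ((Δmax : ℝ) / (Δmin : ℝ)) = 2 * M := by
    rw [hMdef]; ring
  have hset : {ω : Ω | 2 * d * ((Nb v).card : ℝ) * ((Δmax : ℝ) / (Δmin : ℝ)) ≤
          (recvNbhd τ Nb choice 1 v ω : ℝ)}
      = {ω : Ω | (fun g : C × Fin d → 𝕊 =>
          2 * M ≤ ((Finset.univ.filter fun p => g p ∈ Nb v).card : ℝ))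
          (fun p => choice 1 p.1 p.2 ω)} := by
    ext ω
    rw [Set.mem_setOf_eq, Set.mem_setOf_eq, aux_recv_one τ Nb choice v ω, ← hT]
  rw [hset]
  have htr := transfer P (fun p ω => choice 1 p.1 p.2 ω) w hw0 hw1 hatom
    (fun g : C × Fin d → 𝕊 => 2 * M ≤ ((Finset.univ.filter fun p => g p ∈ Nb v).card : ℝ))
  refine le_trans (le_of_eq htr) ?_
  have hcher := chernoff_core w hw0 hw1 (fun _ => Nb v) M hM
  refine le_trans (ENNReal.ofReal_le_ofReal hcher) (ENNReal.ofReal_le_ofReal ?_)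
  apply Real.exp_le_exp.2
  have hdM : (d:ℝ) * Δmax ≤ M := by
    rw [hMdef, le_div_iff₀ hminpos]
    have h1 : (Δmin:ℝ) ≤ ((Nb v).card : ℝ) := by exact_mod_cast hNb v
    have h2 : (0:ℝ) ≤ (d:ℝ) := by positivity
    have h3 : (0:ℝ) ≤ (Δmax:ℝ) := by positivity
    nlinarith [mul_le_mul_of_nonneg_left h1 (mul_nonneg h2 h3)]
  linarith

lemma aux_good_bound [MeasurableSpace Ω]
    (Nb : C → Finset 𝕊) (Δmin Δmax : ℕ)
    (hmin : IsLeast (Set.range fun v => (Nb v).card) Δmin)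
    (hmax : IsGreatest (Set.range fun u => serverDeg Nb u) Δmax)
    (hΔ : 1 ≤ Δmin) (d : ℕ) (hd : 1 ≤ d) (τ : ℝ)
    (P : Measure Ω) [IsProbabilityMeasure P]
    (choice : ℕ → C → Fin d → Ω → 𝕊) (hU : UnifIndep P Nb choice) :
    1 - (Fintype.card C : ℝ≥0∞) * ENNReal.ofReal (Real.exp (-(1 / 3) * d * (Δmax : ℝ)))
      ≤ P {ω | ∀ v : C, ¬ (2 * d * ((Nb v).card : ℝ) * ((Δmax : ℝ) / (Δmin : ℝ)) ≤
            (recvNbhd τ Nb choice 1 v ω : ℝ))} := by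
  classical
  set Bad : C → Set Ω := fun v => {ω | 2 * d * ((Nb v).card : ℝ) * ((Δmax : ℝ) / (Δmin : ℝ)) ≤
      (recvNbhd τ Nb choice 1 v ω : ℝ)} with hBad
  have hunion : P (⋃ v, Bad v)
      ≤ (Fintype.card C : ℝ≥0∞) * ENNReal.ofReal (Real.exp (-(1 / 3) * d * (Δmax : ℝ))) := by
    calc P (⋃ v, Bad v) ≤ ∑' v, P (Bad v) := measure_iUnion_le _
      _ = ∑ v, P (Bad v) := tsum_fintype _
      _ ≤ ∑ _v : C, ENNReal.ofReal (Real.exp (-(1 / 3) * d * (Δmax : ℝ))) :=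
          Finset.sum_le_sum fun v _ =>
            aux_client_bound Nb Δmin Δmax hmin hmax hΔ d hd τ P choice hU v
      _ = _ := by rw [Finset.sum_const, Finset.card_univ, nsmul_eq_mul]
  have hcompl : {ω | ∀ v : C, ¬ (2 * d * ((Nb v).card : ℝ) * ((Δmax : ℝ) / (Δmin : ℝ)) ≤
        (recvNbhd τ Nb choice 1 v ω : ℝ))} = (⋃ v, Bad v)ᶜ := by
    ext ω
    simp [hBad]
  rw [hcompl, tsub_le_iff_right]
  calc (1:ℝ≥0∞) = P Set.univ := measure_univ.symm
    _ = P ((⋃ v, Bad v) ∪ (⋃ v, Bad v)ᶜ) := by rw [Set.union_compl_self]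
    _ ≤ P (⋃ v, Bad v) + P ((⋃ v, Bad v)ᶜ) := measure_union_le _ _
    _ ≤ (Fintype.card C : ℝ≥0∞) * ENNReal.ofReal (Real.exp (-(1 / 3) * d * (Δmax : ℝ)))
          + P ((⋃ v, Bad v)ᶜ) := add_le_add hunion le_rfl
    _ = _ := add_comm _ _

lemma aux_kval {Ω : Type*} (Nb : C → Finset 𝕊)
    {d : ℕ} (choice : ℕ → C → Fin d → Ω → 𝕊) (c : ℝ) (hc : 1 ≤ c) (hd : 1 ≤ d)
    (Δmin Δmax : ℕ) (hΔ : 1 ≤ Δmin) (v : C) (hv : Δmin ≤ (Nb v).card) (ω : Ω)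
    (h : ¬ (2 * d * ((Nb v).card : ℝ) * ((Δmax : ℝ) / (Δmin : ℝ)) ≤
          (recvNbhd (c * d) Nb choice 1 v ω : ℝ))) :
    (recvNbhd (c * d) Nb choice 1 v ω : ℝ)
        ≤ 2 * d * ((Nb v).card : ℝ) * ((Δmax : ℝ) / (Δmin : ℝ))
    ∧ Kval c Nb choice 1 v ω ≤ (2 / c) * ((Δmax : ℝ) / (Δmin : ℝ)) := by
  push_neg at h
  refine ⟨h.le, ?_⟩
  rw [Kval, Finset.Icc_self, Finset.sum_singleton]
  have hc0 : (0:ℝ) < c := lt_of_lt_of_le one_pos hc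
  have hd0 : (0:ℝ) < (d:ℝ) := by exact_mod_cast hd
  have hcard : (0:ℝ) < ((Nb v).card : ℝ) := by exact_mod_cast lt_of_lt_of_le hΔ hv
  rw [div_le_iff₀ (by positivity)]
  calc (recvNbhd (c * d) Nb choice 1 v ω : ℝ)
      ≤ 2 * d * ((Nb v).card : ℝ) * ((Δmax:ℝ) / (Δmin:ℝ)) := h.le
    _ = 2 / c * ((Δmax:ℝ) / (Δmin:ℝ)) * (c * d * ((Nb v).card : ℝ)) := by
        field_simp

lemma aux_min_le_max [Nonempty C]
    (hcard : Fintype.card C = Fintype.card 𝕊)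
    (Nb : C → Finset 𝕊) (Δmin Δmax : ℕ)
    (hmin : IsLeast (Set.range fun v => (Nb v).card) Δmin)
    (hmax : IsGreatest (Set.range fun u => serverDeg Nb u) Δmax) :
    Δmin ≤ Δmax := by
  classical
  have hsum : ∑ u : 𝕊, serverDeg Nb u = ∑ v : C, (Nb v).card := by
    simp only [serverDeg, Finset.card_filter]
    rw [Finset.sum_comm]
    refine Finset.sum_congr rfl fun v _ => ?_
    rw [Finset.sum_ite_mem, Finset.univ_inter, Finset.sum_const, smul_eq_mul, mul_one]
  have h1 : Fintype.card C * Δmin ≤ ∑ v : C, (Nb v).card := by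
    simpa using Finset.card_nsmul_le_sum Finset.univ (fun v => (Nb v).card) Δmin
      (fun v _ => hmin.2 ⟨v, rfl⟩)
  have h2 : ∑ u : 𝕊, serverDeg Nb u ≤ Fintype.card 𝕊 * Δmax := by
    simpa using Finset.sum_le_card_nsmul Finset.univ (fun u => serverDeg Nb u) Δmax
      (fun u _ => hmax.2 ⟨u, rfl⟩)
  have h3 : Fintype.card C * Δmin ≤ Fintype.card C * Δmax := by
    rw [hsum] at h2
    rw [← hcard] at h2
    exact le_trans h1 h2
  exact Nat.le_of_mul_le_mul_left h3 Fintype.card_pos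

lemma aux_nonzero_min [MeasurableSpace Ω]
    [Nonempty 𝕊] {d : ℕ} (hd : 1 ≤ d) (P : Measure Ω) [IsProbabilityMeasure P]
    (Nb : C → Finset 𝕊) (choice : ℕ → C → Fin d → Ω → 𝕊)
    (hU : UnifIndep P Nb choice) (v0 : C) (h0 : (Nb v0).card = 0) : False := by
  have hNb : Nb v0 = ∅ := Finset.card_eq_zero.mp h0
  have i : Fin d := ⟨0, hd⟩
  have hsub : (Set.univ : Set Ω) ⊆ ⋃ u : 𝕊, {ω | choice 1 v0 i ω = u} := by
    intro ω _
    exact Set.mem_iUnion.2 ⟨choice 1 v0 i ω, rfl⟩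
  have h1 : (1:ℝ≥0∞) ≤ ∑' u : 𝕊, P {ω | choice 1 v0 i ω = u} := by
    calc (1:ℝ≥0∞) = P Set.univ := measure_univ.symm
      _ ≤ P (⋃ u : 𝕊, {ω | choice 1 v0 i ω = u}) := measure_mono hsub
      _ ≤ _ := measure_iUnion_le _
  rw [tsum_fintype] at h1
  simp [hU.1, hNb] at h1

end AuxLemmas

/-- Lemma 17, first round, almost-regular case. For all `c, d ≥ 1`
and each client `v`,
`P(r_1(N(v)) ≥ 2d·Δ_v·(Δ_max(S)/Δ_min(C))) ≤ e^{−(1/3)·d·Δ_max(S)}`; consequently, with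
probability at least `1 − n·e^{−(1/3)·d·Δ_max(S)}`, `K_1 ≤ (2/c)·(Δ_max(S)/Δ_min(C))`.
In particular, if `Δ_min(C) ≥ η log² n`, these bounds hold with high probability. -/
theorem saer_first_round_almost_regular :
    (∀ (n : ℕ) (C 𝕊 : Type) [Fintype C] [Fintype 𝕊],
      Fintype.card C = n → Fintype.card 𝕊 = n →
      ∀ (Nb : C → Finset 𝕊) (Δmin Δmax : ℕ),
        IsLeast (Set.range fun v => (Nb v).card) Δmin →
        IsGreatest (Set.range fun u => serverDeg Nb u) Δmax →
      ∀ (d : ℕ), 1 ≤ d → ∀ (c : ℝ), 1 ≤ c →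
      ∀ (Ω : Type) [MeasurableSpace Ω] (P : Measure Ω) [IsProbabilityMeasure P]
        (choice : ℕ → C → Fin d → Ω → 𝕊), UnifIndep P Nb choice →
        (∀ v : C,
          P {ω | 2 * d * ((Nb v).card : ℝ) * ((Δmax : ℝ) / (Δmin : ℝ)) ≤
                (recvNbhd (c * d) Nb choice 1 v ω : ℝ)}
            ≤ ENNReal.ofReal (Real.exp (-(1 / 3) * d * (Δmax : ℝ)))) ∧
        1 - n * ENNReal.ofReal (Real.exp (-(1 / 3) * d * (Δmax : ℝ))) ≤
          P {ω | ∀ v : C,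
              Kval c Nb choice 1 v ω ≤ (2 / c) * ((Δmax : ℝ) / (Δmin : ℝ))}) ∧
    (∀ η : ℝ, 0 < η → ∀ (d : ℕ), 1 ≤ d → ∀ (c : ℝ), 1 ≤ c →
      ∃ γ : ℝ, 0 < γ ∧ ∃ N : ℕ, ∀ n : ℕ, N ≤ n →
      ∀ (C 𝕊 : Type) [Fintype C] [Fintype 𝕊],
        Fintype.card C = n → Fintype.card 𝕊 = n →
        ∀ (Nb : C → Finset 𝕊) (Δmin Δmax : ℕ),
          IsLeast (Set.range fun v => (Nb v).card) Δmin →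
          IsGreatest (Set.range fun u => serverDeg Nb u) Δmax →
          η * Real.log n ^ 2 ≤ (Δmin : ℝ) →
        ∀ (Ω : Type) [MeasurableSpace Ω] (P : Measure Ω) [IsProbabilityMeasure P]
          (choice : ℕ → C → Fin d → Ω → 𝕊), UnifIndep P Nb choice →
          1 - ENNReal.ofReal ((n : ℝ) ^ (-γ)) ≤
            P {ω | (∀ v : C, (recvNbhd (c * d) Nb choice 1 v ω : ℝ) ≤
                      2 * d * ((Nb v).card : ℝ) * ((Δmax : ℝ) / (Δmin : ℝ))) ∧
                   (∀ v : C,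
                      Kval c Nb choice 1 v ω ≤ (2 / c) * ((Δmax : ℝ) / (Δmin : ℝ)))}) := by
  constructor
  · intro n C 𝕊 _ _ hC h𝕊 Nb Δmin Δmax hmin hmax d hd c hc Ω _ P _ choice hU
    by_cases hCe : IsEmpty C
    · constructor
      · intro v
        exact (hCe.false v).elim
      · have huniv : {ω : Ω | ∀ v : C,
            Kval c Nb choice 1 v ω ≤ (2 / c) * ((Δmax:ℝ) / (Δmin:ℝ))} = Set.univ := by
          ext ω
          simp only [Set.mem_setOf_eq, Set.mem_univ, iff_true]
          intro v
          exact (hCe.false v).elim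
        rw [huniv, measure_univ]
        exact tsub_le_self.trans le_rfl
    · have hne : Nonempty C := not_isEmpty_iff.mp hCe
      have h𝕊ne : Nonempty 𝕊 := by
        refine Fintype.card_pos_iff.mp ?_
        rw [h𝕊, ← hC]
        exact Fintype.card_pos
      have hΔ : 1 ≤ Δmin := by
        by_contra hlt
        push_neg at hlt
        obtain ⟨v0, hv0⟩ := hmin.1
        have hv0' : (Nb v0).card = Δmin := hv0
        exact aux_nonzero_min hd P Nb choice hU v0 (by omega)
      constructor
      · intro v
        exact aux_client_bound Nb Δmin Δmax hmin hmax hΔ d hd (c * d) P choice hU v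
      · have hgood := aux_good_bound Nb Δmin Δmax hmin hmax hΔ d hd (c * d) P choice hU
        have hsub : {ω : Ω | ∀ v : C,
              ¬ (2 * d * ((Nb v).card : ℝ) * ((Δmax : ℝ) / (Δmin : ℝ)) ≤
                (recvNbhd (c * d) Nb choice 1 v ω : ℝ))}
            ⊆ {ω : Ω | ∀ v : C,
                Kval c Nb choice 1 v ω ≤ (2 / c) * ((Δmax:ℝ) / (Δmin:ℝ))} := by
          intro ω hω v
          exact (aux_kval Nb choice c hc hd Δmin Δmax hΔ v (hmin.2 ⟨v, rfl⟩) ω (hω v)).2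
        rw [← hC]
        exact le_trans hgood (measure_mono hsub)
  · intro η hη d hd c hc
    refine ⟨1, one_pos, max 2 (Nat.ceil (Real.exp (6 / η)) + 1), ?_⟩
    intro n hn C 𝕊 _ _ hC h𝕊 Nb Δmin Δmax hmin hmax hΔmin Ω _ P _ choice hU
    have hn2 : 2 ≤ n := le_trans (le_max_left _ _) hn
    have hn0 : (0:ℝ) < n := by
      have : (0:ℕ) < n := by omega
      exact_mod_cast this
    have hexp : Real.exp (6 / η) ≤ n := by
      have hle : Nat.ceil (Real.exp (6 / η)) + 1 ≤ n := le_trans (le_max_right _ _) hn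
      calc Real.exp (6 / η) ≤ (Nat.ceil (Real.exp (6 / η)) : ℝ) := Nat.le_ceil _
        _ ≤ (n:ℝ) := by exact_mod_cast Nat.le_of_succ_le hle
    have hlog : 6 / η ≤ Real.log n := by
      rw [← Real.log_exp (6 / η)]
      exact Real.log_le_log (Real.exp_pos _) hexp
    have hlogpos : 0 < Real.log n := lt_of_lt_of_le (by positivity) hlog
    have hηlog : 6 ≤ η * Real.log n := by
      rw [div_le_iff₀ hη] at hlog
      linarith
    have hΔ1 : 1 ≤ Δmin := by
      have hpos : (0:ℝ) < (Δmin:ℝ) := lt_of_lt_of_le (by positivity) hΔmin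
      have : 0 < Δmin := by exact_mod_cast hpos
      omega
    have hneC : Nonempty C := Fintype.card_pos_iff.mp (by omega)
    have hminmax : Δmin ≤ Δmax := aux_min_le_max (by rw [hC, h𝕊]) Nb Δmin Δmax hmin hmax
    have hgood := aux_good_bound Nb Δmin Δmax hmin hmax hΔ1 d hd (c * d) P choice hU
    have hsub : {ω : Ω | ∀ v : C,
          ¬ (2 * d * ((Nb v).card : ℝ) * ((Δmax : ℝ) / (Δmin : ℝ)) ≤
            (recvNbhd (c * d) Nb choice 1 v ω : ℝ))}
        ⊆ {ω : Ω | (∀ v : C, (recvNbhd (c * d) Nb choice 1 v ω : ℝ) ≤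
              2 * d * ((Nb v).card : ℝ) * ((Δmax : ℝ) / (Δmin : ℝ))) ∧
            (∀ v : C, Kval c Nb choice 1 v ω ≤ (2 / c) * ((Δmax : ℝ) / (Δmin : ℝ)))} := by
      intro ω hω
      constructor
      · intro v
        exact (aux_kval Nb choice c hc hd Δmin Δmax hΔ1 v (hmin.2 ⟨v, rfl⟩) ω (hω v)).1
      · intro v
        exact (aux_kval Nb choice c hc hd Δmin Δmax hΔ1 v (hmin.2 ⟨v, rfl⟩) ω (hω v)).2
    refine le_trans ?_ (le_trans hgood (measure_mono hsub))
    rw [hC]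
    refine tsub_le_tsub_left ?_ 1
    have h1 : (Δmin:ℝ) ≤ (d:ℝ) * Δmax := by
      have hd1 : (1:ℝ) ≤ (d:ℝ) := by exact_mod_cast hd
      have hmm : (Δmin:ℝ) ≤ (Δmax:ℝ) := by exact_mod_cast hminmax
      nlinarith [Nat.cast_nonneg (α := ℝ) Δmax]
    have h2 : 2 * Real.log n ≤ (1/3) * ((d:ℝ) * Δmax) := by
      nlinarith [mul_le_mul_of_nonneg_right hηlog hlogpos.le, hΔmin, h1]
    have hreal : (n:ℝ) * Real.exp (-(1/3) * d * (Δmax:ℝ)) ≤ (n:ℝ) ^ (-(1:ℝ)) := by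
      calc (n:ℝ) * Real.exp (-(1/3) * d * (Δmax:ℝ))
          ≤ (n:ℝ) * Real.exp (-(2 * Real.log n)) := by
            refine mul_le_mul_of_nonneg_left ?_ hn0.le
            apply Real.exp_le_exp.2
            linarith
        _ = (n:ℝ) ^ (-(1:ℝ)) := by
            rw [Real.rpow_def_of_pos hn0]
            conv_lhs => rw [← Real.exp_log hn0]
            rw [← Real.exp_add]
            congr 1
            rw [Real.log_exp]
            ring
    calc (n:ℝ≥0∞) * ENNReal.ofReal (Real.exp (-(1 / 3) * d * (Δmax : ℝ)))
        = ENNReal.ofReal ((n:ℝ) * Real.exp (-(1 / 3) * d * (Δmax : ℝ))) := by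
          rw [ENNReal.ofReal_mul (Nat.cast_nonneg n), ENNReal.ofReal_natCast]
      _ ≤ ENNReal.ofReal ((n:ℝ) ^ (-(1:ℝ))) := ENNReal.ofReal_le_ofReal hreal


end LoadBalancing
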